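/- Fix a real number ρ > 0 and define L(x) = x^{ρ+1} · ρ·B(x, ρ+1) for real x > 0, where B(x, y) = Γ(x)Γ(y)/Γ(x+y). Then for every real t > 0, L(t·x)/L(x) tends to 1 as x tends to infinity; consequently the Yule distribution with parameter ρ, whose mass function can be written as f(k) = L(k)·k^{−(ρ+1)}, is a power-law distribution with exponent −(ρ+1). -/

import Mathlib

open Filter Topology

lemma one_add_div_tendsto (a : ℝ) :
    Tendsto (fun x : ℝ => 1 + a / x) atTop (𝓝 1) := by
  have h0 : Tendsto (fun x : ℝ => a / x) atTop (𝓝 0) :=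
    tendsto_const_nhds.div_atTop tendsto_id
  simpa using tendsto_const_nhds.add h0

lemma gamma_upper {a x : ℝ} (ha : 0 ≤ a) (ha1 : a ≤ 1) (hx : 0 < x) :
    Real.Gamma (x + a) ≤ Real.Gamma x * x ^ a := by
  have hconv := Real.convexOn_log_Gamma
  have hmem1 : x ∈ Set.Ioi (0:ℝ) := hx
  have hmem2 : x + 1 ∈ Set.Ioi (0:ℝ) := by simp only [Set.mem_Ioi]; linarith
  have key := hconv.2 hmem1 hmem2 (by linarith : (0:ℝ) ≤ 1 - a) ha (by ring)
  have hc : (1 - a) • x + a • (x + 1) = x + a := by simp only [smul_eq_mul]; ring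
  rw [hc] at key
  simp only [Function.comp_apply, smul_eq_mul] at key
  have hΓx : 0 < Real.Gamma x := Real.Gamma_pos_of_pos hx
  have hΓxa : 0 < Real.Gamma (x + a) := Real.Gamma_pos_of_pos (by linarith)
  have hΓx1 : Real.Gamma (x + 1) = x * Real.Gamma x := Real.Gamma_add_one hx.ne'
  have h := Real.exp_le_exp.mpr key
  rw [Real.exp_log hΓxa] at h
  calc Real.Gamma (x + a) ≤ Real.exp ((1 - a) * Real.log (Real.Gamma x)
        + a * Real.log (Real.Gamma (x + 1))) := h
    _ = Real.Gamma x ^ (1 - a) * Real.Gamma (x + 1) ^ a := by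
        rw [Real.exp_add, Real.rpow_def_of_pos hΓx,
          Real.rpow_def_of_pos (by rw [hΓx1]; positivity : (0:ℝ) < Real.Gamma (x+1)),
          mul_comm (Real.log (Real.Gamma x)), mul_comm (Real.log (Real.Gamma (x+1)))]
    _ = Real.Gamma x * x ^ a := by
        rw [hΓx1, Real.mul_rpow hx.le hΓx.le, ← mul_assoc,
          mul_comm (Real.Gamma x ^ (1 - a)) (x ^ a), mul_assoc,
          ← Real.rpow_add hΓx]
        rw [sub_add_cancel, Real.rpow_one]
        ring

lemma gamma_lower {a x : ℝ} (ha : 0 ≤ a) (ha1 : a ≤ 1) (hx : 0 < x) :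
    Real.Gamma x * x ≤ Real.Gamma (x + a) * (x + a) ^ (1 - a) := by
  have hconv := Real.convexOn_log_Gamma
  have hxa : 0 < x + a := by linarith
  have hmem1 : x + a ∈ Set.Ioi (0:ℝ) := hxa
  have hmem2 : x + a + 1 ∈ Set.Ioi (0:ℝ) := by simp only [Set.mem_Ioi]; linarith
  have key := hconv.2 hmem1 hmem2 ha (by linarith : (0:ℝ) ≤ 1 - a) (by ring)
  have hc : a • (x + a) + (1 - a) • (x + a + 1) = x + 1 := by
    simp only [smul_eq_mul]; ring
  rw [hc] at key
  simp only [Function.comp_apply, smul_eq_mul] at key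
  have hΓxa : 0 < Real.Gamma (x + a) := Real.Gamma_pos_of_pos hxa
  have hΓx : 0 < Real.Gamma x := Real.Gamma_pos_of_pos hx
  have hΓx1 : Real.Gamma (x + 1) = x * Real.Gamma x := Real.Gamma_add_one hx.ne'
  have hΓxa1 : Real.Gamma (x + a + 1) = (x + a) * Real.Gamma (x + a) :=
    Real.Gamma_add_one hxa.ne'
  have h := Real.exp_le_exp.mpr key
  rw [Real.exp_log (by rw [hΓx1]; positivity : 0 < Real.Gamma (x+1))] at h
  have h2 : Real.exp (a * Real.log (Real.Gamma (x + a))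
      + (1 - a) * Real.log (Real.Gamma (x + a + 1)))
      = Real.Gamma (x + a) * (x + a) ^ (1 - a) := by
    have hlogB : Real.log (Real.Gamma (x + a + 1))
        = Real.log (x + a) + Real.log (Real.Gamma (x + a)) := by
      rw [hΓxa1, Real.log_mul hxa.ne' hΓxa.ne']
    rw [hlogB]
    have e : a * Real.log (Real.Gamma (x + a))
        + (1 - a) * (Real.log (x + a) + Real.log (Real.Gamma (x + a)))
        = Real.log (Real.Gamma (x + a)) + Real.log (x + a) * (1 - a) := by ring
    rw [e, Real.exp_add, Real.exp_log hΓxa, ← Real.rpow_def_of_pos hxa]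
  rw [h2] at h
  calc Real.Gamma x * x = Real.Gamma (x + 1) := by rw [hΓx1]; ring
    _ ≤ _ := h

lemma ratio_tendsto_base {a : ℝ} (ha : 0 ≤ a) (ha1 : a ≤ 1) :
    Tendsto (fun x : ℝ => Real.Gamma (x + a) / (Real.Gamma x * x ^ a)) atTop (𝓝 1) := by
  have h1 : Tendsto (fun x : ℝ => x / (x + a)) atTop (𝓝 1) := by
    have h := (one_add_div_tendsto a).inv₀ (by norm_num)
    simp only [inv_one] at h
    refine h.congr' ?_
    filter_upwards [eventually_gt_atTop 0] with x hx
    have e : 1 + a / x = (x + a) / x := by rw [add_div, div_self hx.ne']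
    rw [e, inv_div]
  have hlow : Tendsto (fun x : ℝ => (x / (x + a)) ^ (1 - a)) atTop (𝓝 1) := by
    have := (Real.continuousAt_rpow_const 1 (1 - a) (Or.inl one_ne_zero)).tendsto.comp h1
    simpa [Function.comp_def] using this
  refine tendsto_of_tendsto_of_tendsto_of_le_of_le' hlow tendsto_const_nhds ?_ ?_
  · filter_upwards [eventually_gt_atTop 0] with x hx
    have hxa : 0 < x + a := by linarith
    have hΓx : 0 < Real.Gamma x := Real.Gamma_pos_of_pos hx
    have hΓxa : 0 < Real.Gamma (x + a) := Real.Gamma_pos_of_pos hxa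
    rw [Real.div_rpow hx.le hxa.le, div_le_div_iff₀ (by positivity) (by positivity)]
    calc x ^ (1 - a) * (Real.Gamma x * x ^ a)
        = Real.Gamma x * x := by
          rw [mul_comm (Real.Gamma x), ← mul_assoc, ← Real.rpow_add hx,
            sub_add_cancel, Real.rpow_one]
          ring
      _ ≤ Real.Gamma (x + a) * (x + a) ^ (1 - a) := gamma_lower ha ha1 hx
  · filter_upwards [eventually_gt_atTop 0] with x hx
    have hΓx : 0 < Real.Gamma x := Real.Gamma_pos_of_pos hx
    rw [div_le_one (by positivity)]
    exact gamma_upper ha ha1 hx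

lemma ratio_step {a : ℝ} (ha : 0 ≤ a)
    (h : Tendsto (fun x : ℝ => Real.Gamma (x + a) / (Real.Gamma x * x ^ a)) atTop (𝓝 1)) :
    Tendsto (fun x : ℝ => Real.Gamma (x + (a + 1)) / (Real.Gamma x * x ^ (a + 1)))
      atTop (𝓝 1) := by
  have h2 := (one_add_div_tendsto a).mul h
  rw [mul_one] at h2
  refine h2.congr' ?_
  filter_upwards [eventually_gt_atTop 0] with x hx
  have hxa : 0 < x + a := by linarith
  have hΓx : 0 < Real.Gamma x := Real.Gamma_pos_of_pos hx
  have hΓxa : 0 < Real.Gamma (x + a) := Real.Gamma_pos_of_pos hxa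
  have e1 : Real.Gamma (x + (a + 1)) = (x + a) * Real.Gamma (x + a) := by
    rw [← add_assoc]; exact Real.Gamma_add_one hxa.ne'
  have e2 : x ^ (a + 1) = x ^ a * x := by rw [Real.rpow_add_one hx.ne']
  rw [e1, e2]
  have hx' : x ≠ 0 := hx.ne'
  have hxapow : x ^ a ≠ 0 := (Real.rpow_pos_of_pos hx a).ne'
  field_simp

lemma ratio_tendsto_aux : ∀ n : ℕ, ∀ c : ℝ, 0 ≤ c → c ≤ n →
    Tendsto (fun x : ℝ => Real.Gamma (x + c) / (Real.Gamma x * x ^ c)) atTop (𝓝 1) := by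
  intro n
  induction n with
  | zero => intro c hc hcn
            have : c = 0 := le_antisymm (by exact_mod_cast hcn) hc
            subst this
            exact ratio_tendsto_base le_rfl zero_le_one
  | succ n ih =>
    intro c hc hcn
    by_cases h1 : c ≤ 1
    · exact ratio_tendsto_base hc h1
    · push_neg at h1
      have h2 := ih (c - 1) (by linarith) (by push_cast at hcn ⊢; linarith)
      have h3 := ratio_step (by linarith : (0:ℝ) ≤ c - 1) h2
      simpa [sub_add_cancel] using h3

lemma ratio_tendsto {c : ℝ} (hc : 0 ≤ c) :
    Tendsto (fun x : ℝ => Real.Gamma (x + c) / (Real.Gamma x * x ^ c)) atTop (𝓝 1) :=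
  ratio_tendsto_aux (Nat.ceil c) c hc (Nat.le_ceil c)

/-- The Euler Beta function `B(x, y) = Γ(x)Γ(y)/Γ(x+y)`. -/
noncomputable def eulerBeta (x y : ℝ) : ℝ :=
  Real.Gamma x * Real.Gamma y / Real.Gamma (x + y)

/-- For `ρ > 0` and `L(x) = x^{ρ+1} · ρ·B(x, ρ+1)` (for `x > 0`): for every `t > 0`,
`L(t·x)/L(x) → 1` as `x → ∞`, and the Yule mass function satisfies
`f(k) = L(k)·k^{−(ρ+1)}`; hence the Yule distribution with parameter `ρ` is a
power-law distribution with exponent `−(ρ+1)`. -/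
theorem yule_is_powerlaw (ρ : ℝ) (hρ : 0 < ρ)
    (L : ℝ → ℝ) (hL : ∀ x : ℝ, 0 < x → L x = x ^ (ρ + 1) * (ρ * eulerBeta x (ρ + 1))) :
    (∀ t : ℝ, 0 < t → Tendsto (fun x : ℝ => L (t * x) / L x) atTop (𝓝 1)) ∧
    (∀ k : ℕ+, ρ * eulerBeta (k : ℝ) (ρ + 1) = L k * (k : ℝ) ^ (-(ρ + 1))) := by
  set c := ρ * Real.Gamma (ρ + 1) with hc_def
  have hΓρ : 0 < Real.Gamma (ρ + 1) := Real.Gamma_pos_of_pos (by linarith)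
  have hcpos : 0 < c := mul_pos hρ hΓρ
  have hLlim : Tendsto L atTop (𝓝 c) := by
    have h := ratio_tendsto (by linarith : (0:ℝ) ≤ ρ + 1)
    have h2 := h.inv₀ (by norm_num)
    rw [inv_one] at h2
    have h3 := h2.const_mul c
    rw [mul_one] at h3
    refine h3.congr' ?_
    filter_upwards [eventually_gt_atTop 0] with x hx
    have hΓx : 0 < Real.Gamma x := Real.Gamma_pos_of_pos hx
    have hΓxρ : 0 < Real.Gamma (x + (ρ + 1)) := Real.Gamma_pos_of_pos (by linarith)
    have hxp : (0:ℝ) < x ^ (ρ + 1) := Real.rpow_pos_of_pos hx _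
    rw [hL x hx, eulerBeta]
    field_simp
    ring
  constructor
  · intro t ht
    have htx : Tendsto (fun x : ℝ => t * x) atTop atTop :=
      Tendsto.const_mul_atTop ht tendsto_id
    have h1 : Tendsto (fun x : ℝ => L (t * x)) atTop (𝓝 c) := hLlim.comp htx
    have := h1.div hLlim hcpos.ne'
    simpa [div_self hcpos.ne', Pi.div_def] using this
  · intro k
    have hk : (0:ℝ) < (k : ℝ) := by exact_mod_cast k.pos
    rw [hL k hk, mul_comm ((k:ℝ) ^ (ρ + 1)), mul_assoc, ← Real.rpow_add hk,
      add_neg_cancel, Real.rpow_zero, mul_one]
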